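/- Let G be a finite simple graph on vertex set V with n vertices, let B ⊆ V have at least two elements (say k = |B|) and I = V ∖ B be nonempty, suppose the subgraph of G induced on I is connected and every vertex of B has at least one neighbor in I. Let ω be the stress that equals 1 on every edge of G having at least one endpoint in I and 0 on every edge with both endpoints in B. Then for all distinct i, j ∈ B the substitution stress ω̃_{ij} := −(L_{BB} − L_{BI} L_{II}^{-1} L_{IB})_{ij} satisfies ω̃_{ij} < n − k = |I|. -/

import Mathlib

open Matrix BigOperators

/-- The weighted Laplacian of a graph `G` with stress `w`. -/
def weightedLaplacian {V : Type*} [Fintype V] [DecidableEq V]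
    (G : SimpleGraph V) [DecidableRel G.Adj] (w : V → V → ℝ) : Matrix V V ℝ :=
  fun i j =>
    if i = j then ∑ k ∈ G.neighborFinset i, w i k
    else if G.Adj i j then - w i j else 0

section
variable {V : Type*} [Fintype V] [DecidableEq V]
    {G : SimpleGraph V} [DecidableRel G.Adj] {w : V → V → ℝ}

lemma wl_row (x : V → ℝ) (a : V) :
    ((weightedLaplacian G w) *ᵥ x) a
      = ∑ b, (if G.Adj a b then w a b else 0) * (x a - x b) := by
  have hD : (∑ k ∈ G.neighborFinset a, w a k) = ∑ b, (if G.Adj a b then w a b else 0) := by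
    rw [SimpleGraph.neighborFinset_eq_filter, Finset.sum_filter]
  have hL : ∀ b, weightedLaplacian G w a b
      = (if a = b then (∑ b', (if G.Adj a b' then w a b' else 0)) else 0)
        - (if G.Adj a b then w a b else 0) := by
    intro b
    unfold weightedLaplacian
    by_cases hab : a = b
    · subst hab; simp [G.irrefl, hD]
    · simp only [hab, if_false, zero_sub]
      split_ifs <;> ring
  simp only [Matrix.mulVec, dotProduct, hL, sub_mul, ite_mul, zero_mul,
    Finset.sum_sub_distrib, Finset.sum_ite_eq, Finset.mem_univ, if_true, mul_sub,
    Finset.sum_mul]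

lemma wl_quad (hWsym : ∀ a b, (if G.Adj a b then w a b else 0) = (if G.Adj b a then w b a else 0))
    (x : V → ℝ) :
    2 * (x ⬝ᵥ ((weightedLaplacian G w) *ᵥ x))
      = ∑ a, ∑ b, (if G.Adj a b then w a b else 0) * (x a - x b)^2 := by
  set Wf : V → V → ℝ := fun a b => (if G.Adj a b then w a b else 0) with hWf
  have hswap : ∑ a, ∑ b, Wf a b * x b * (x a - x b)
      = -∑ a, ∑ b, Wf a b * x a * (x a - x b) := by
    rw [Finset.sum_comm, ← Finset.sum_neg_distrib]
    refine Finset.sum_congr rfl fun a _ => ?_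
    rw [← Finset.sum_neg_distrib]
    refine Finset.sum_congr rfl fun b _ => ?_
    rw [show Wf b a = Wf a b from (hWsym a b).symm]
    ring
  have lhs : x ⬝ᵥ ((weightedLaplacian G w) *ᵥ x) = ∑ a, ∑ b, Wf a b * x a * (x a - x b) := by
    simp only [dotProduct, wl_row, Finset.mul_sum]
    exact Finset.sum_congr rfl fun a _ => Finset.sum_congr rfl fun b _ => by ring
  have rhs : ∑ a, ∑ b, Wf a b * (x a - x b)^2
      = ∑ a, ∑ b, Wf a b * x a * (x a - x b) - ∑ a, ∑ b, Wf a b * x b * (x a - x b) := by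
    rw [← Finset.sum_sub_distrib]
    refine Finset.sum_congr rfl fun a _ => ?_
    rw [← Finset.sum_sub_distrib]
    exact Finset.sum_congr rfl fun b _ => by ring
  rw [lhs, rhs, hswap]; ring

lemma walk_const {V' : Type*} {G' : SimpleGraph V'} (f : V' → ℝ)
    (h : ∀ a b, G'.Adj a b → f a = f b) {u v : V'} (huv : G'.Reachable u v) : f u = f v := by
  obtain ⟨p⟩ := huv
  induction p with
  | nil => rfl
  | cons hadj _ ih => exact (h _ _ hadj).trans ih

end


/-- **Upper bound on the substitution stresses (Lemma 2, part 2).** Let `G` be a finite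
simple graph on `n` vertices, `B` a boundary set with at least two vertices (`k = |B|`)
and nonempty complement `I`, the subgraph induced on `I` connected, and every boundary
vertex having a neighbor in `I`. For the stress that is `1` on every edge with at least
one endpoint in `I` and `0` on edges inside `B`, every substitution stress
`ω̃_ij = -(L_BB - L_BI L_II⁻¹ L_IB)_ij` (for `i ≠ j` in `B`) is less than `n - k = |I|`. -/
theorem substitution_stress_upper_bound
    {V : Type*} [Fintype V] [DecidableEq V]
    (G : SimpleGraph V) [DecidableRel G.Adj]
    (B : Finset V) (hB : 2 ≤ B.card) (hI : ∃ v, v ∉ B)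
    (hIconn : (G.induce {v : V | v ∉ B}).Connected)
    (hBnbr : ∀ b ∈ B, ∃ v, v ∉ B ∧ G.Adj b v)
    (w : V → V → ℝ)
    (hw : ∀ i j, G.Adj i j → ((i ∉ B ∨ j ∉ B) → w i j = 1) ∧ (i ∈ B → j ∈ B → w i j = 0)) :
    ∀ i j : {v : V // v ∈ B}, i ≠ j →
      -(((weightedLaplacian G w).submatrix
              (fun i : {v : V // v ∈ B} => (i : V)) (fun j : {v : V // v ∈ B} => (j : V))
            - ((weightedLaplacian G w).submatrix
                (fun i : {v : V // v ∈ B} => (i : V)) (fun j : {v : V // v ∉ B} => (j : V)))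
              * ((weightedLaplacian G w).submatrix
                  (fun i : {v : V // v ∉ B} => (i : V)) (fun j : {v : V // v ∉ B} => (j : V)))⁻¹
              * ((weightedLaplacian G w).submatrix
                  (fun i : {v : V // v ∉ B} => (i : V)) (fun j : {v : V // v ∈ B} => (j : V))))
            i j)
        < (Fintype.card V : ℝ) - B.card := by
  intro i j hij
  set L := weightedLaplacian G w with hLdef
  set Wf : V → V → ℝ := fun a b => (if G.Adj a b then w a b else 0) with hWfdef
  -- basic weight facts
  have hw01 : ∀ a b, G.Adj a b → w a b = if (a ∉ B ∨ b ∉ B) then 1 else 0 := by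
    intro a b hab
    by_cases h : a ∉ B ∨ b ∉ B
    · rw [if_pos h]; exact (hw a b hab).1 h
    · rw [if_neg h]
      push_neg at h
      exact (hw a b hab).2 h.1 h.2
  have hWsym : ∀ a b, Wf a b = Wf b a := by
    intro a b
    simp only [hWfdef]
    by_cases hab : G.Adj a b
    · rw [if_pos hab, if_pos hab.symm, hw01 a b hab, hw01 b a hab.symm]
      exact if_congr or_comm rfl rfl
    · rw [if_neg hab, if_neg fun h => hab h.symm]
  have hWnonneg : ∀ a b, 0 ≤ Wf a b := by
    intro a b
    simp only [hWfdef]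
    split_ifs with hab
    · rw [hw01 a b hab]; split_ifs <;> norm_num
    · exact le_refl 0
  have hWone : ∀ a b, G.Adj a b → (a ∉ B ∨ b ∉ B) → Wf a b = 1 := by
    intro a b hab h
    simp only [hWfdef, if_pos hab]
    exact (hw a b hab).1 h
  have hLsymm : ∀ a b, L a b = L b a := by
    intro a b
    by_cases hab : a = b
    · rw [hab]
    · show weightedLaplacian G w a b = weightedLaplacian G w b a
      unfold weightedLaplacian
      rw [if_neg hab, if_neg (Ne.symm hab)]
      by_cases h : G.Adj a b
      · rw [if_pos h, if_pos h.symm, hw01 a b h, hw01 b a h.symm,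
          if_congr (or_comm (a := a ∉ B) (b := b ∉ B)) rfl rfl]
      · rw [if_neg h, if_neg fun h' => h h'.symm]
  have hLH : L.IsHermitian := by
    ext a b
    simp only [Matrix.conjTranspose_apply, star_trivial]
    exact hLsymm b a
  -- PSD of L
  have hLpsd : L.PosSemidef := by
    refine posSemidef_iff_dotProduct_mulVec.mpr ⟨hLH, fun x => ?_⟩
    have hq := wl_quad (w := w) (G := G) (fun a b => hWsym a b) x
    have hnn : 0 ≤ ∑ a, ∑ b, Wf a b * (x a - x b)^2 :=
      Finset.sum_nonneg fun a _ => Finset.sum_nonneg fun b _ =>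
        mul_nonneg (hWnonneg a b) (sq_nonneg _)
    have : (star x : V → ℝ) = x := funext fun v => star_trivial _
    rw [this]
    nlinarith [hq, hnn]
  -- block structure
  set A := L.submatrix (fun i : {v : V // v ∈ B} => (i : V)) (fun j : {v : V // v ∈ B} => (j : V)) with hAdef
  set C := L.submatrix (fun i : {v : V // v ∈ B} => (i : V)) (fun j : {v : V // v ∉ B} => (j : V)) with hCdef
  set C' := L.submatrix (fun i : {v : V // v ∉ B} => (i : V)) (fun j : {v : V // v ∈ B} => (j : V)) with hC'def
  set D := L.submatrix (fun i : {v : V // v ∉ B} => (i : V)) (fun j : {v : V // v ∉ B} => (j : V)) with hDdef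
  have hC'H : C' = Cᴴ := by
    ext v b
    simp only [hC'def, hCdef, Matrix.conjTranspose_apply, Matrix.submatrix_apply, star_trivial]
    exact hLsymm v b
  set e : {v : V // v ∈ B} ⊕ {v : V // v ∉ B} ≃ V := Equiv.sumCompl (· ∈ B) with hedef
  have hblocks : L.submatrix e e = Matrix.fromBlocks A C C' D := by
    ext a b
    cases a <;> cases b <;> rfl
  have hMpsd : (Matrix.fromBlocks A C Cᴴ D).PosSemidef := by
    rw [← hC'H, ← hblocks]
    exact hLpsd.submatrix e
  -- positive definiteness of D
  have hDpd : D.PosDef := by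
    refine Matrix.PosDef.of_dotProduct_mulVec_pos ?_ ?_
    · ext a b
      simp only [Matrix.conjTranspose_apply, star_trivial, hDdef, Matrix.submatrix_apply]
      exact hLsymm _ _
    · intro x hx
      have hstar : (star x) = x := funext fun v => star_trivial _
      rw [hstar]
      set z : {v : V // v ∈ B} ⊕ {v : V // v ∉ B} → ℝ := Sum.elim 0 x with hzdef
      set xt : V → ℝ := z ∘ e.symm with hxt
      have hxtB : ∀ a (h : a ∈ B), xt a = 0 := by
        intro a h
        simp only [hxt, Function.comp_apply, hedef, Equiv.sumCompl, Equiv.coe_fn_symm_mk, dif_pos h,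
          hzdef, Sum.elim_inl, Pi.zero_apply]
      have hxtI : ∀ a (h : a ∉ B), xt a = x ⟨a, h⟩ := by
        intro a h
        simp only [hxt, Function.comp_apply, hedef, Equiv.sumCompl, Equiv.coe_fn_symm_mk, dif_neg h,
          hzdef, Sum.elim_inr]
      have hform : x ⬝ᵥ (D *ᵥ x) = xt ⬝ᵥ (L *ᵥ xt) := by
        have h1 : z ⬝ᵥ ((L.submatrix e e) *ᵥ z) = x ⬝ᵥ (D *ᵥ x) := by
          rw [hblocks, hzdef, Matrix.fromBlocks_mulVec, sumElim_dotProduct_sumElim]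
          simp
        have h2 : z ⬝ᵥ ((L.submatrix e e) *ᵥ z) = xt ⬝ᵥ (L *ᵥ xt) := by
          rw [Matrix.submatrix_mulVec_equiv L z (⇑e) e, ← hxt]
          unfold dotProduct
          exact Fintype.sum_equiv e _ _ fun s => by
            rw [Function.comp_apply]
            congr 1
            rw [hxt]; simp
        rw [← h1, h2]
      have hq := wl_quad (w := w) (G := G) (fun a b => hWsym a b) xt
      have hnn : ∀ a ∈ (Finset.univ : Finset V), 0 ≤ ∑ b, Wf a b * (xt a - xt b)^2 :=
        fun a _ => Finset.sum_nonneg fun b _ => mul_nonneg (hWnonneg a b) (sq_nonneg _)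
      have hge : 0 ≤ x ⬝ᵥ (D *ᵥ x) := by
        rw [hform]
        nlinarith [hq, Finset.sum_nonneg hnn]
      refine lt_of_le_of_ne hge fun h0 => hx ?_
      -- all edge terms vanish
      have h2q : 2 * (x ⬝ᵥ (D *ᵥ x)) = ∑ a, ∑ b, Wf a b * (xt a - xt b)^2 := by
        rw [hform]; exact hq
      have hzero : ∑ a, ∑ b, Wf a b * (xt a - xt b)^2 = 0 := by
        rw [← h2q, ← h0]; ring
      have hterm : ∀ a b, Wf a b * (xt a - xt b)^2 = 0 := by
        intro a b
        have h1 := (Finset.sum_eq_zero_iff_of_nonneg hnn).mp hzero a (Finset.mem_univ a)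
        have h2 := (Finset.sum_eq_zero_iff_of_nonneg
          (fun b _ => mul_nonneg (hWnonneg a b) (sq_nonneg _))).mp h1 b (Finset.mem_univ b)
        exact h2
      have hedge : ∀ a b, G.Adj a b → (a ∉ B ∨ b ∉ B) → xt a = xt b := by
        intro a b hab h
        have := hterm a b
        rw [hWone a b hab h, one_mul] at this
        have := pow_eq_zero_iff (n := 2) (by norm_num) |>.mp this
        linarith [sub_eq_zero.mp this]
      have hconst : ∀ u v : {v : V // v ∉ B}, xt ↑u = xt ↑v := by
        intro u v
        refine walk_const (G' := G.induce {v : V | v ∉ B}) (fun s => xt ↑s) ?_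
          (hIconn.preconnected u v)
        intro a b hadj
        exact hedge ↑a ↑b hadj (Or.inl a.2)
      obtain ⟨b₀, hb₀⟩ := Finset.card_pos.mp (by omega : 0 < B.card)
      obtain ⟨v₀, hv₀, hadj⟩ := hBnbr b₀ hb₀
      have hv₀0 : xt v₀ = 0 := by
        rw [← hedge b₀ v₀ hadj (Or.inr hv₀), hxtB b₀ hb₀]
      funext u
      have : xt ↑u = 0 := (hconst u ⟨v₀, hv₀⟩).trans hv₀0
      rw [hxtI ↑u u.2] at this
      simpa using this
  haveI : Invertible D := hDpd.isUnit.invertible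
  have hSpsd : (A - C * D⁻¹ * Cᴴ).PosSemidef := (Matrix.PosDef.fromBlocks₂₂ A C hDpd).mp hMpsd
  set S := A - C * D⁻¹ * C' with hSdef
  have hS : S = A - C * D⁻¹ * Cᴴ := by rw [hSdef, hC'H]
  -- diagonal bound for A
  have hAii : ∀ k : {v : V // v ∈ B}, A k k ≤ (Fintype.card V : ℝ) - B.card := by
    intro k
    have h0 : A k k = ∑ b ∈ G.neighborFinset ↑k, w ↑k b := by
      show weightedLaplacian G w ↑k ↑k = _
      simp [weightedLaplacian]
    have h1 : ∑ b ∈ G.neighborFinset ↑k, w ↑k b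
        = ∑ b ∈ G.neighborFinset ↑k, (if b ∉ B then (1:ℝ) else 0) := by
      refine Finset.sum_congr rfl fun b hb => ?_
      rw [hw01 ↑k b ((G.mem_neighborFinset _ _).mp hb),
        if_congr (or_iff_right (not_not_intro k.2)) rfl rfl]
    have h2 : ∑ b ∈ G.neighborFinset ↑k, (if b ∉ B then (1:ℝ) else 0)
        = (((G.neighborFinset ↑k).filter (· ∉ B)).card : ℝ) := by
      rw [Finset.sum_boole]
    have h3 : ((G.neighborFinset ↑k).filter (· ∉ B)).card
        ≤ (Finset.univ.filter (· ∉ B)).card :=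
      Finset.card_le_card (Finset.filter_subset_filter _ (Finset.subset_univ _))
    have h4 : (Finset.univ.filter (· ∉ B)).card = Fintype.card V - B.card := by
      have : Finset.univ.filter (fun v : V => v ∉ B) = Finset.univ \ B := by
        ext v; simp
      rw [this, Finset.card_sdiff_of_subset (Finset.subset_univ B), Finset.card_univ]
    have h5 : ((Fintype.card V - B.card : ℕ) : ℝ) = (Fintype.card V : ℝ) - B.card := by
      have : B.card ≤ Fintype.card V := by
        rw [← Finset.card_univ]; exact Finset.card_le_univ B
      exact Nat.cast_sub this
    rw [h0, h1, h2, ← h5]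
    exact_mod_cast h4 ▸ h3
  -- positivity of the correction term on the diagonal
  have hqpos : ∀ k : {v : V // v ∈ B}, 0 < (C * D⁻¹ * C') k k := by
    intro k
    obtain ⟨v₀, hv₀, hadj⟩ := hBnbr ↑k k.2
    set u : {v : V // v ∉ B} → ℝ := fun v => C' v k with hudef
    have hCu : ∀ v : {v : V // v ∉ B}, C k v = u v := fun v => hLsymm ↑k ↑v
    have hId : (C * D⁻¹ * C') k k = u ⬝ᵥ (D⁻¹ *ᵥ u) := by
      rw [Matrix.mul_assoc, Matrix.mul_apply]
      unfold dotProduct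
      refine Finset.sum_congr rfl fun v _ => ?_
      rw [hCu v]
      congr 1
    have hval : u ⟨v₀, hv₀⟩ = -1 := by
      show weightedLaplacian G w v₀ ↑k = -1
      have hne : v₀ ≠ ↑k := fun h => hv₀ (h ▸ k.2)
      unfold weightedLaplacian
      rw [if_neg hne, if_pos hadj.symm, (hw v₀ ↑k hadj.symm).1 (Or.inl hv₀)]
    have hune : u ≠ 0 := by
      intro h
      have := congrFun h ⟨v₀, hv₀⟩
      rw [hval] at this
      norm_num at this
    have := (hDpd.inv).dotProduct_mulVec_pos hune
    rwa [show (star u) = u from funext fun v => star_trivial _, ← hId] at this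
  have hSii : ∀ k : {v : V // v ∈ B}, S k k < (Fintype.card V : ℝ) - B.card := by
    intro k
    have hsub : S k k = A k k - (C * D⁻¹ * C') k k := by
      rw [hSdef]; simp [Matrix.sub_apply]
    rw [hsub]
    have := hAii k; have := hqpos k
    linarith
  have hSH : S.IsHermitian := by rw [hS]; exact hSpsd.1
  have hherm : S j i = S i j := by
    have := congrFun (congrFun hSH i) j
    simpa [Matrix.conjTranspose_apply] using this
  have hposz : 0 ≤ S i i + (S j i + (S i j + S j j)) := by
    have hv := (posSemidef_iff_dotProduct_mulVec.mp hSpsd).2 (Pi.single i 1 + Pi.single j 1)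
    rw [← hS] at hv
    have hst : (star (Pi.single i 1 + Pi.single j 1) : {v : V // v ∈ B} → ℝ)
        = Pi.single i 1 + Pi.single j 1 := funext fun v => star_trivial _
    rw [hst] at hv
    simpa [Matrix.mulVec_add, dotProduct_add, add_dotProduct,
      Matrix.mulVec_single, single_dotProduct, add_assoc] using hv
  have := hSii i; have := hSii j
  show -(S i j) < (Fintype.card V : ℝ) - B.card
  linarith
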